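/- arXiv:2103.14351 — 2 statements merged into one kernel-verified Lean document; each statement's English description precedes it below -/
import Mathlib

section
/- Let r ∈ (0,1]. Then every zero p ∈ Δ of f^{(r)} has strictly positive coordinates (p_i > 0 for all i) and satisfies 2(1−r)(M̃p)_i = r(1 − 1/(d p_i)) for all i ∈ [d]; moreover f^{(r)} has at most one zero in Δ: if f^{(r)}(p) = f^{(r)}(q) = 0 with p, q ∈ Δ, then p = q. -/
open Finset

/-- The L¹ distance on `ℝ^d`. -/
noncomputable def l1dist {m : ℕ} (x y : Fin m → ℝ) : ℝ := ∑ i, |x i - y i|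

/-- The unit simplex in `ℝ^d`. -/
def unitSimplex (d : ℕ) : Set (Fin d → ℝ) := {x | (∀ i, 0 ≤ x i) ∧ ∑ i, x i = 1}

/-- The vector field `f^{(r)}` with `f^{(r)}_i(p) = 2(1−r) p_i (M̃p)_i + r(1/d − p_i)`. -/
noncomputable def fvec (d : ℕ) (Mt : Matrix (Fin d) (Fin d) ℝ) (r : ℝ) :
    (Fin d → ℝ) → Fin d → ℝ :=
  fun p i => 2 * (1 - r) * p i * Mt.mulVec p i + r * (1 / (d : ℝ) - p i)

lemma skew_quad {d : ℕ} (Mt : Matrix (Fin d) (Fin d) ℝ)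
    (hskew : ∀ i j, Mt j i = - Mt i j) (x : Fin d → ℝ) :
    ∑ i, x i * Mt.mulVec x i = 0 := by
  have h2 : (∑ i, x i * Mt.mulVec x i) = ∑ i, ∑ j, x i * (Mt i j * x j) := by
    simp [Matrix.mulVec, dotProduct, Finset.mul_sum]
  have h3 : (∑ i, x i * Mt.mulVec x i) = ∑ j, ∑ i, x i * (Mt i j * x j) := by
    rw [h2, Finset.sum_comm]
  have hsum : (∑ i, x i * Mt.mulVec x i) + (∑ i, x i * Mt.mulVec x i) = 0 := by
    nth_rewrite 1 [h2]
    nth_rewrite 1 [h3]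
    rw [← Finset.sum_add_distrib]
    apply Finset.sum_eq_zero; intro i _
    rw [← Finset.sum_add_distrib]
    apply Finset.sum_eq_zero; intro j _
    rw [hskew i j]; ring
  linarith

lemma zero_props {d : ℕ} (hd : 1 ≤ d) (Mt : Matrix (Fin d) (Fin d) ℝ)
    (r : ℝ) (hr0 : 0 < r) (p : Fin d → ℝ) (hp : p ∈ unitSimplex d)
    (hf : fvec d Mt r p = 0) :
    (∀ i, 0 < p i) ∧
      (∀ i, 2 * (1 - r) * Mt.mulVec p i = r * (1 - 1 / ((d : ℝ) * p i))) := by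
  have hdpos : (0 : ℝ) < (d : ℝ) := by exact_mod_cast hd
  have hpos : ∀ i, 0 < p i := by
    intro i
    have h := congrFun hf i
    simp only [fvec, Pi.zero_apply] at h
    rcases lt_or_eq_of_le (hp.1 i) with h1 | h1
    · exact h1
    · exfalso
      rw [← h1] at h
      have h2 : r * (1 / (d : ℝ)) > 0 := by positivity
      nlinarith
  refine ⟨hpos, fun i => ?_⟩
  have h := congrFun hf i
  simp only [fvec, Pi.zero_apply] at h
  have hpi := hpos i
  have hne : p i ≠ 0 := ne_of_gt hpi
  have hdne : (d : ℝ) ≠ 0 := ne_of_gt hdpos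
  field_simp at h ⊢
  nlinarith [h]

theorem stmt1 (d : ℕ) (hd : 1 ≤ d) (Mt : Matrix (Fin d) (Fin d) ℝ)
    (hskew : ∀ i j, Mt j i = - Mt i j) (hbound : ∀ i j, |Mt i j| ≤ 1)
    (r : ℝ) (hr0 : 0 < r) (hr1 : r ≤ 1) :
    (∀ p ∈ unitSimplex d, fvec d Mt r p = 0 →
      (∀ i, 0 < p i) ∧
      (∀ i, 2 * (1 - r) * Mt.mulVec p i = r * (1 - 1 / ((d : ℝ) * p i)))) ∧
    (∀ p ∈ unitSimplex d, ∀ q ∈ unitSimplex d,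
      fvec d Mt r p = 0 → fvec d Mt r q = 0 → p = q) := by
  have hdpos : (0 : ℝ) < (d : ℝ) := by exact_mod_cast hd
  refine ⟨fun p hp hf => zero_props hd Mt r hr0 p hp hf, ?_⟩
  intro p hp q hq hfp hfq
  obtain ⟨hppos, hP⟩ := zero_props hd Mt r hr0 p hp hfp
  obtain ⟨hqpos, hQ⟩ := zero_props hd Mt r hr0 q hq hfq
  have key := skew_quad Mt hskew (p - q)
  have hmv : Mt.mulVec (p - q) = Mt.mulVec p - Mt.mulVec q := Matrix.mulVec_sub Mt p q
  have hterm : ∀ i, (p i - q i) * (r / ((d : ℝ) * q i) - r / ((d : ℝ) * p i))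
      = 2 * (1 - r) * ((p - q) i * Mt.mulVec (p - q) i) := by
    intro i
    have h1 := hP i
    have h2 := hQ i
    simp only [hmv, Pi.sub_apply]
    linear_combination (p i - q i) * h2 - (p i - q i) * h1
  have hsum0 : ∑ i, (p i - q i) * (r / ((d : ℝ) * q i) - r / ((d : ℝ) * p i)) = 0 := by
    rw [Finset.sum_congr rfl (fun i _ => hterm i), ← Finset.mul_sum, key, mul_zero]
  have hform : ∀ i, (p i - q i) * (r / ((d : ℝ) * q i) - r / ((d : ℝ) * p i))
      = r * (p i - q i) ^ 2 / ((d : ℝ) * p i * q i) := by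
    intro i
    have hpi := (hppos i).ne'
    have hqi := (hqpos i).ne'
    field_simp
  have hnn : ∀ i ∈ Finset.univ, (0:ℝ) ≤ (p i - q i) * (r / ((d : ℝ) * q i) - r / ((d : ℝ) * p i)) := by
    intro i _
    rw [hform i]
    have := hppos i
    have := hqpos i
    positivity
  have heach := (Finset.sum_eq_zero_iff_of_nonneg hnn).mp hsum0
  funext i
  have h0 := heach i (Finset.mem_univ i)
  rw [hform i] at h0
  have hpi := hppos i
  have hqi := hqpos i
  have hden : (0:ℝ) < (d : ℝ) * p i * q i := by positivity
  have hsq : (p i - q i) ^ 2 = 0 := by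
    have := div_eq_zero_iff.mp h0
    rcases this with h | h
    · rcases mul_eq_zero.mp h with h' | h'
      · exact absurd h' (ne_of_gt hr0)
      · exact h'
    · exact absurd h (ne_of_gt hden)
  have := pow_eq_zero_iff (n := 2) (by norm_num) |>.mp hsq
  linarith [this]
end

section
/- Let r ∈ (0,1] and let p^{(r)} be the unique zero of f^{(r)} in Δ. Then lim_{t→∞} sup{ |y^{(r)}(t,p₀) − p^{(r)}| : p₀ ∈ Δ } = 0; that is, the solution of the replicator-mutation differential equation converges to p^{(r)} as t → ∞, uniformly in the initial state p₀. -/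
open Finset Set Filter

/-- Monotone from within-derivative nonneg on `Ici a`. -/
lemma monoOn_Ici_of_deriv {a : ℝ} {g g' : ℝ → ℝ}
    (hg : ∀ t ∈ Ici a, HasDerivWithinAt g (g' t) (Ici a) t)
    (h0 : ∀ t ∈ Ici a, 0 ≤ g' t) : MonotoneOn g (Ici a) := by
  apply monotoneOn_of_deriv_nonneg (convex_Ici a)
  · intro t ht; exact (hg t ht).continuousWithinAt
  · intro t ht
    rw [interior_Ici] at ht
    exact ((hg t (Set.mem_Ici.2 (Set.mem_Ioi.1 ht).le)).hasDerivAt (Ici_mem_nhds ht)).differentiableAt.differentiableWithinAt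
  · intro t ht
    rw [interior_Ici] at ht
    rw [((hg t (Set.mem_Ici.2 (Set.mem_Ioi.1 ht).le)).hasDerivAt (Ici_mem_nhds ht)).deriv]
    exact h0 t (Set.mem_Ici.2 (Set.mem_Ioi.1 ht).le)

lemma antiOn_Ici_of_deriv {a : ℝ} {g g' : ℝ → ℝ}
    (hg : ∀ t ∈ Ici a, HasDerivWithinAt g (g' t) (Ici a) t)
    (h0 : ∀ t ∈ Ici a, g' t ≤ 0) : AntitoneOn g (Ici a) := by
  apply antitoneOn_of_deriv_nonpos (convex_Ici a)
  · intro t ht; exact (hg t ht).continuousWithinAt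
  · intro t ht
    rw [interior_Ici] at ht
    exact ((hg t (Set.mem_Ici.2 (Set.mem_Ioi.1 ht).le)).hasDerivAt (Ici_mem_nhds ht)).differentiableAt.differentiableWithinAt
  · intro t ht
    rw [interior_Ici] at ht
    rw [((hg t (Set.mem_Ici.2 (Set.mem_Ioi.1 ht).le)).hasDerivAt (Ici_mem_nhds ht)).deriv]
    exact h0 t (Set.mem_Ici.2 (Set.mem_Ioi.1 ht).le)

/-- Refined logarithm inequality: for `0 < y ≤ B` with `B ≥ 6`,
`log y ≤ (y-1) - (y-1)^2/(2B)`. -/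
lemma log_le_aux {B y : ℝ} (hB : 6 ≤ B) (hy : 0 < y) (hyB : y ≤ B) :
    Real.log y ≤ (y - 1) - (y - 1) ^ 2 / (2 * B) := by
  set s := Real.sqrt y with hs_def
  have hs : s ^ 2 = y := Real.sq_sqrt hy.le
  have hs0 : 0 < s := Real.sqrt_pos.2 hy
  have hlog : Real.log y ≤ 2 * (s - 1) := by
    have h1 : Real.log s ≤ s - 1 := Real.log_le_sub_one_of_pos hs0
    have h2 : Real.log y = 2 * Real.log s := by
      rw [← hs, Real.log_pow]; push_cast; ring
    linarith
  set u := Real.sqrt B with hu_def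
  have hu : u ^ 2 = B := Real.sq_sqrt (by linarith)
  have hu0 : 0 ≤ u := Real.sqrt_nonneg B
  have hsu : s ≤ u := Real.sqrt_le_sqrt hyB
  have hkey : (y - 1) ^ 2 / (2 * B) ≤ (s - 1) ^ 2 := by
    rw [div_le_iff₀ (by nlinarith)]
    have h3 : (s + 1) ^ 2 ≤ 2 * B := by nlinarith [sq_nonneg (u - 3)]
    have h4 : (y - 1) ^ 2 = (s - 1) ^ 2 * (s + 1) ^ 2 := by rw [← hs]; ring
    nlinarith [sq_nonneg (s - 1)]
  nlinarith [hlog, hkey]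

lemma simplex_le_one {d : ℕ} {p : Fin d → ℝ} (hp : p ∈ unitSimplex d) (i : Fin d) :
    p i ≤ 1 := by
  have h := hp.2
  calc p i ≤ ∑ j, p j := Finset.single_le_sum (fun j _ => hp.1 j) (Finset.mem_univ i)
  _ = 1 := h

lemma mulVec_abs_le {d : ℕ} (Mt : Matrix (Fin d) (Fin d) ℝ) (hbound : ∀ i j, |Mt i j| ≤ 1)
    {p : Fin d → ℝ} (hp : p ∈ unitSimplex d) (i : Fin d) : |Mt.mulVec p i| ≤ 1 := by
  have h1 : Mt.mulVec p i = ∑ j, Mt i j * p j := rfl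
  rw [h1]
  calc |∑ j, Mt i j * p j| ≤ ∑ j, |Mt i j * p j| := Finset.abs_sum_le_sum_abs _ _
  _ ≤ ∑ j, p j := by
      refine Finset.sum_le_sum fun j _ => ?_
      rw [abs_mul]
      calc |Mt i j| * |p j| ≤ 1 * |p j| := by
            exact mul_le_mul_of_nonneg_right (hbound i j) (abs_nonneg _)
      _ = |p j| := one_mul _
      _ = p j := abs_of_nonneg (hp.1 j)
  _ = 1 := hp.2

lemma fvec_lower {d : ℕ} (Mt : Matrix (Fin d) (Fin d) ℝ) (hbound : ∀ i j, |Mt i j| ≤ 1)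
    {r : ℝ} (hr0 : 0 < r) (hr1 : r ≤ 1) {p : Fin d → ℝ} (hp : p ∈ unitSimplex d) (i : Fin d) :
    r / d - 2 * p i ≤ fvec d Mt r p i := by
  have h1 := abs_le.1 (mulVec_abs_le Mt hbound hp i)
  have h2 := hp.1 i
  unfold fvec
  have h3 : -(2 * (1 - r) * p i) ≤ 2 * (1 - r) * p i * Mt.mulVec p i := by
    nlinarith [mul_nonneg (mul_nonneg (by linarith : (0:ℝ) ≤ 2 * (1 - r)) h2)
      (by linarith [h1.1] : (0:ℝ) ≤ Mt.mulVec p i + 1)]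
  have h5 : r * (1 / (d:ℝ) - p i) = r / d - r * p i := by ring
  rw [h5]
  nlinarith [mul_nonneg hr0.le h2, h3]

/-- lower bound on the coordinates of the zero of fvec -/
lemma pr_lower {d : ℕ} (Mt : Matrix (Fin d) (Fin d) ℝ) (hbound : ∀ i j, |Mt i j| ≤ 1)
    {r : ℝ} (hr0 : 0 < r) (hr1 : r ≤ 1) {pr : Fin d → ℝ} (hpr : pr ∈ unitSimplex d)
    (hprz : fvec d Mt r pr = 0) (hd : 0 < (d:ℝ)) (i : Fin d) : r / (2 * d) ≤ pr i := by
  have h := congrFun hprz i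
  unfold fvec at h
  simp only [Pi.zero_apply] at h
  have h1 := abs_le.1 (mulVec_abs_le Mt hbound hpr i)
  have h2 := hpr.1 i
  -- r/d = r * pr i - 2(1-r) pr i Mpr_i ≤ pr i (r + 2(1-r)) ≤ 2 pr i
  have hexp : r * (1 / (d:ℝ) - pr i) = r / d - r * pr i := by ring
  rw [hexp] at h
  have hhalf : r / (2 * (d:ℝ)) = (r / d) / 2 := by ring
  rw [hhalf]
  nlinarith [mul_nonneg (mul_nonneg (by linarith : (0:ℝ) ≤ 2 * (1 - r)) h2)
    (by linarith [h1.1] : (0:ℝ) ≤ Mt.mulVec pr i + 1), mul_nonneg hr0.le h2]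

/-- The key Lyapunov derivative inequality. -/
lemma key_ineq {d : ℕ} (Mt : Matrix (Fin d) (Fin d) ℝ) (hskew : ∀ i j, Mt j i = - Mt i j)
    {r : ℝ} (hr0 : 0 < r) {pr p : Fin d → ℝ} (hpr : pr ∈ unitSimplex d) (hp : p ∈ unitSimplex d)
    (hprz : fvec d Mt r pr = 0) (hppos : ∀ i, 0 < p i) (hprpos : ∀ i, 0 < pr i)
    (hd : 0 < (d:ℝ)) :
    (r / d) * ∑ i, (p i - pr i) ^ 2 ≤ ∑ i, pr i * (fvec d Mt r p i / p i) := by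
  have step1 : ∑ i, pr i * (fvec d Mt r p i / p i)
      = (∑ i, 2 * (1 - r) * pr i * Mt.mulVec p i) + ∑ i, r * pr i * (1 / d - p i) / p i := by
    rw [← Finset.sum_add_distrib]
    refine Finset.sum_congr rfl fun i _ => ?_
    have hpi := (hppos i).ne'
    unfold fvec
    field_simp
  have step3 : ∀ i, -(2 * (1 - r) * p i * Mt.mulVec pr i) = r * p i * (1 / d - pr i) / pr i := by
    intro i
    have h := congrFun hprz i
    unfold fvec at h
    simp only [Pi.zero_apply] at h
    rw [eq_div_iff (hprpos i).ne']
    linear_combination (-(p i)) * h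
  have step2 : (∑ i, 2 * (1 - r) * pr i * Mt.mulVec p i)
      = ∑ i, r * p i * (1 / d - pr i) / pr i := by
    have e1 : ∑ i, 2 * (1 - r) * pr i * Mt.mulVec p i
        = ∑ i, ∑ j, 2 * (1 - r) * pr i * (Mt i j * p j) := by
      refine Finset.sum_congr rfl fun i _ => ?_
      simp only [Matrix.mulVec, dotProduct, Finset.mul_sum]
    have e2 : ∑ i, ∑ j, 2 * (1 - r) * pr i * (Mt i j * p j)
        = ∑ i, -(2 * (1 - r) * p i * Mt.mulVec pr i) := by
      calc ∑ i, ∑ j, 2 * (1 - r) * pr i * (Mt i j * p j)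
          = ∑ i, ∑ j, -(2 * (1 - r) * p j * (Mt j i * pr i)) := by
            refine Finset.sum_congr rfl fun i _ => Finset.sum_congr rfl fun j _ => ?_
            rw [hskew i j]
            ring
        _ = ∑ j, ∑ i, -(2 * (1 - r) * p j * (Mt j i * pr i)) := Finset.sum_comm
        _ = ∑ j, -(2 * (1 - r) * p j * Mt.mulVec pr j) := by
            refine Finset.sum_congr rfl fun j _ => ?_
            rw [show Mt.mulVec pr j = ∑ i, Mt j i * pr i from rfl, Finset.mul_sum,
              ← Finset.sum_neg_distrib]
    rw [e1, e2]
    exact Finset.sum_congr rfl fun i _ => step3 i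
  rw [step1, step2, ← Finset.sum_add_distrib]
  have main : ∑ i, (r * p i * (1 / ↑d - pr i) / pr i + r * pr i * (1 / ↑d - p i) / p i)
      = ∑ i, ((r/d) * (p i / pr i + pr i / p i) - r * p i - r * pr i) := by
    refine Finset.sum_congr rfl fun i _ => ?_
    have h1 := (hppos i).ne'
    have h2 := (hprpos i).ne'
    field_simp
    ring
  rw [main]
  have csum : ∑ i, ((r/d) * (p i / pr i + pr i / p i) - r * p i - r * pr i)
      = ∑ i, ((r/d) * (p i / pr i + pr i / p i) - 2 * r / d) := by
    rw [Finset.sum_sub_distrib, Finset.sum_sub_distrib, Finset.sum_sub_distrib]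
    simp only [← Finset.mul_sum]
    rw [hp.2, hpr.2, Finset.sum_const, Finset.card_univ, Fintype.card_fin, nsmul_eq_mul]
    have hd0 : (d : ℝ) ≠ 0 := hd.ne'
    field_simp
    ring
  rw [csum, Finset.mul_sum]
  refine Finset.sum_le_sum fun i _ => ?_
  have h1 := hppos i
  have h2 := hprpos i
  have h3 : p i * pr i ≤ 1 :=
    mul_le_one₀ (simplex_le_one hp i) h2.le (simplex_le_one hpr i)
  have hid : p i / pr i + pr i / p i - 2 = (p i - pr i) ^ 2 / (p i * pr i) := by
    field_simp
    ring
  have h4 : (p i - pr i) ^ 2 ≤ (p i - pr i) ^ 2 / (p i * pr i) := by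
    rw [le_div_iff₀ (by positivity)]
    nlinarith [sq_nonneg (p i - pr i)]
  have hrd : 0 ≤ r / (d:ℝ) := by positivity
  have h5 : r / (d:ℝ) * ((p i - pr i) ^ 2 / (p i * pr i))
      = r / ↑d * (p i / pr i + pr i / p i) - 2 * r / ↑d := by
    rw [← hid]
    ring
  linarith [mul_le_mul_of_nonneg_left h4 hrd, h5]

/-- Upper bound on the KL Lyapunov function. -/
lemma V_upper {d : ℕ} {c : ℝ} (hc : 0 < c) {pr p : Fin d → ℝ}
    (hsum : ∑ i, p i = ∑ i, pr i) (hprpos : ∀ i, 0 < pr i) (hpc : ∀ i, c ≤ p i) :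
    ∑ i, pr i * (Real.log (pr i) - Real.log (p i)) ≤ (1 / c) * ∑ i, (p i - pr i) ^ 2 := by
  have hpp : ∀ i, 0 < p i := fun i => lt_of_lt_of_le hc (hpc i)
  have step : ∀ i, pr i * (Real.log (pr i) - Real.log (p i))
      ≤ (pr i - p i) ^ 2 / p i + (pr i - p i) := by
    intro i
    have hlog : Real.log (pr i) - Real.log (p i) = Real.log (pr i / p i) := by
      rw [Real.log_div (hprpos i).ne' (hpp i).ne']
    have h1 : Real.log (pr i / p i) ≤ pr i / p i - 1 :=
      Real.log_le_sub_one_of_pos (div_pos (hprpos i) (hpp i))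
    have hpne : p i ≠ 0 := (hpp i).ne'
    have h2 : pr i * (pr i / p i - 1) = (pr i - p i) ^ 2 / p i + (pr i - p i) := by
      field_simp
      ring
    calc pr i * (Real.log (pr i) - Real.log (p i))
        ≤ pr i * (pr i / p i - 1) := by
          rw [hlog]; exact mul_le_mul_of_nonneg_left h1 (hprpos i).le
      _ = (pr i - p i) ^ 2 / p i + (pr i - p i) := h2
  calc ∑ i, pr i * (Real.log (pr i) - Real.log (p i))
      ≤ ∑ i, ((pr i - p i) ^ 2 / p i + (pr i - p i)) := Finset.sum_le_sum fun i _ => step i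
    _ = ∑ i, (pr i - p i) ^ 2 / p i + (∑ i, pr i - ∑ i, p i) := by
        rw [Finset.sum_add_distrib, Finset.sum_sub_distrib]
    _ = ∑ i, (pr i - p i) ^ 2 / p i := by rw [hsum]; ring
    _ ≤ ∑ i, (1 / c) * (p i - pr i) ^ 2 := by
        refine Finset.sum_le_sum fun i _ => ?_
        have h3 : (pr i - p i) ^ 2 = (p i - pr i) ^ 2 := by ring
        rw [h3, div_eq_inv_mul, ← one_div]
        exact mul_le_mul_of_nonneg_right (by
          rw [div_le_div_iff₀ (hpp i) hc]
          nlinarith [hpc i, hc]) (sq_nonneg _)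
    _ = (1 / c) * ∑ i, (p i - pr i) ^ 2 := by rw [Finset.mul_sum]

/-- Lower bound on the KL Lyapunov function (Pinsker-type). -/
lemma V_lower {d : ℕ} {B : ℝ} (hB : 6 ≤ B) {pr p : Fin d → ℝ}
    (hsum : ∑ i, p i = ∑ i, pr i) (hprpos : ∀ i, 0 < pr i) (hpr1 : ∀ i, pr i ≤ 1)
    (hppos : ∀ i, 0 < p i) (hpB : ∀ i, p i ≤ B * pr i) :
    (1 / (2 * B)) * ∑ i, (p i - pr i) ^ 2
      ≤ ∑ i, pr i * (Real.log (pr i) - Real.log (p i)) := by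
  have hB0 : 0 < B := by linarith
  have step : ∀ i, pr i * (Real.log (p i) - Real.log (pr i))
      ≤ (p i - pr i) - (p i - pr i) ^ 2 / (2 * B) := by
    intro i
    set yv := p i / pr i with hyv
    have hy0 : 0 < yv := div_pos (hppos i) (hprpos i)
    have hyB : yv ≤ B := by
      rw [hyv, div_le_iff₀ (hprpos i)]
      exact hpB i
    have hlog : Real.log (p i) - Real.log (pr i) = Real.log yv := by
      rw [hyv, Real.log_div (hppos i).ne' (hprpos i).ne']
    have h1 : Real.log yv ≤ (yv - 1) - (yv - 1) ^ 2 / (2 * B) := log_le_aux hB hy0 hyB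
    have hprne : pr i ≠ 0 := (hprpos i).ne'
    have hBne : B ≠ 0 := hB0.ne'
    have h2 : pr i * ((yv - 1) - (yv - 1) ^ 2 / (2 * B))
        = (p i - pr i) - (p i - pr i) ^ 2 / (pr i * (2 * B)) := by
      rw [hyv]
      field_simp
    have h3 : (p i - pr i) ^ 2 / (2 * B) ≤ (p i - pr i) ^ 2 / (pr i * (2 * B)) := by
      apply div_le_div_of_nonneg_left (sq_nonneg _) (mul_pos (hprpos i) (by positivity))
      calc pr i * (2 * B) ≤ 1 * (2 * B) :=
            mul_le_mul_of_nonneg_right (hpr1 i) (by positivity)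
        _ = 2 * B := one_mul _
    calc pr i * (Real.log (p i) - Real.log (pr i))
        ≤ pr i * ((yv - 1) - (yv - 1) ^ 2 / (2 * B)) := by
          rw [hlog]; exact mul_le_mul_of_nonneg_left h1 (hprpos i).le
      _ = (p i - pr i) - (p i - pr i) ^ 2 / (pr i * (2 * B)) := h2
      _ ≤ (p i - pr i) - (p i - pr i) ^ 2 / (2 * B) := by linarith [h3]
  have hsum2 : ∑ i, pr i * (Real.log (p i) - Real.log (pr i))
      ≤ - ∑ i, (p i - pr i) ^ 2 / (2 * B) := by
    calc ∑ i, pr i * (Real.log (p i) - Real.log (pr i))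
        ≤ ∑ i, ((p i - pr i) - (p i - pr i) ^ 2 / (2 * B)) :=
          Finset.sum_le_sum fun i _ => step i
      _ = (∑ i, p i - ∑ i, pr i) - ∑ i, (p i - pr i) ^ 2 / (2 * B) := by
          rw [Finset.sum_sub_distrib, Finset.sum_sub_distrib]
      _ = - ∑ i, (p i - pr i) ^ 2 / (2 * B) := by rw [hsum]; ring
  have e1 : ∑ i, pr i * (Real.log (pr i) - Real.log (p i))
      = - ∑ i, pr i * (Real.log (p i) - Real.log (pr i)) := by
    rw [← Finset.sum_neg_distrib]
    exact Finset.sum_congr rfl fun i _ => by ring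
  have e2 : (1 / (2 * B)) * ∑ i, (p i - pr i) ^ 2 = ∑ i, (p i - pr i) ^ 2 / (2 * B) := by
    rw [Finset.mul_sum]
    exact Finset.sum_congr rfl fun i _ => by ring
  rw [e1, e2]
  linarith [hsum2]

set_option maxHeartbeats 1000000 in
lemma master_bound (d : ℕ) (hd : 1 ≤ d) (Mt : Matrix (Fin d) (Fin d) ℝ)
    (hskew : ∀ i j, Mt j i = - Mt i j) (hbound : ∀ i j, |Mt i j| ≤ 1)
    (r : ℝ) (hr0 : 0 < r) (hr1 : r ≤ 1)
    (pr : Fin d → ℝ) (hpr : pr ∈ unitSimplex d) (hprz : fvec d Mt r pr = 0)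
    (y : (Fin d → ℝ) → ℝ → Fin d → ℝ)
    (hy0 : ∀ p₀ ∈ unitSimplex d, y p₀ 0 = p₀)
    (hyΔ : ∀ p₀ ∈ unitSimplex d, ∀ t ∈ Ici (0 : ℝ), y p₀ t ∈ unitSimplex d)
    (hyD : ∀ p₀ ∈ unitSimplex d, ∀ t ∈ Ici (0 : ℝ),
      HasDerivWithinAt (y p₀) (fvec d Mt r (y p₀ t)) (Ici 0) t) :
    ∀ t ∈ Ici (1:ℝ), ∀ p₀ ∈ unitSimplex d,
      l1dist (y p₀ t) pr ≤ Real.sqrt (2 * (12 * (d:ℝ) / r) * (d:ℝ) * (- Real.log (r / (4 * (d:ℝ)))))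
        * Real.exp (-((r * (r / (4 * (d:ℝ))) / (d:ℝ))/2) * (t-1)) := by
  have hd1 : (1:ℝ) ≤ (d:ℝ) := by exact_mod_cast hd
  have hd0 : (0:ℝ) < (d:ℝ) := by linarith
  set c : ℝ := r / (4 * (d:ℝ)) with hc_def
  have hc0 : 0 < c := by positivity
  have hc1 : c ≤ 1 := by
    rw [hc_def, div_le_one (by positivity)]
    linarith
  set B : ℝ := 12 * (d:ℝ) / r with hB_def
  have hB6 : (6:ℝ) ≤ B := by
    rw [hB_def, le_div_iff₀ hr0]
    nlinarith
  have hB0 : (0:ℝ) < B := by linarith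
  set α : ℝ := r * c / (d:ℝ) with hα_def
  have hα0 : 0 < α := by positivity
  set L : ℝ := - Real.log c with hL_def
  have hL0 : 0 ≤ L := by
    rw [hL_def, neg_nonneg]
    exact Real.log_nonpos hc0.le hc1
  set C : ℝ := Real.sqrt (2 * B * (d:ℝ) * L) with hC_def
  have hC0 : 0 ≤ C := Real.sqrt_nonneg _
  have hprl : ∀ i, r / (2 * (d:ℝ)) ≤ pr i :=
    fun i => pr_lower Mt hbound hr0 hr1 hpr hprz hd0 i
  have hprpos : ∀ i, 0 < pr i := fun i => lt_of_lt_of_le (by positivity) (hprl i)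
  -- the main uniform exponential bound
  intro t ht p₀ hp₀
  have ht0 : t ∈ Ici (0:ℝ) := Set.mem_Ici.2 (le_trans zero_le_one ht)
  -- Step 1: coordinatewise lower bound c ≤ y p₀ s i for s ≥ 1
  have hzc : ∀ i, ∀ s ∈ Ici (1:ℝ), c ≤ y p₀ s i := by
    intro i s hs
    have hs0 : s ∈ Ici (0:ℝ) := Set.mem_Ici.2 (le_trans zero_le_one hs)
    set φ : ℝ → ℝ := fun u => Real.exp (2*u) * y p₀ u i
      - r/(2*(d:ℝ)) * (Real.exp (2*u) - 1) with hφ_def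
    set φ' : ℝ → ℝ := fun u => Real.exp (2*u) * 2 * y p₀ u i
      + Real.exp (2*u) * fvec d Mt r (y p₀ u) i
      - r/(2*(d:ℝ)) * (Real.exp (2*u) * 2) with hφ'_def
    have hφd : ∀ u ∈ Ici (0:ℝ), HasDerivWithinAt φ (φ' u) (Ici 0) u := by
      intro u hu
      have hz : HasDerivWithinAt (fun v => y p₀ v i) (fvec d Mt r (y p₀ u) i) (Ici 0) u :=
        hasDerivWithinAt_pi.1 (hyD p₀ hp₀ u hu) i
      have he : HasDerivAt (fun v : ℝ => Real.exp (2*v)) (Real.exp (2*u) * 2) u := by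
        have h2 : HasDerivAt (fun v : ℝ => 2*v) 2 u := by
          simpa using (hasDerivAt_id u).const_mul (2:ℝ)
        exact (Real.hasDerivAt_exp (2*u)).comp u h2
      exact (he.hasDerivWithinAt.mul hz).sub
        ((he.hasDerivWithinAt.sub_const 1).const_mul (r/(2*(d:ℝ))))
    have hφ'nn : ∀ u ∈ Ici (0:ℝ), 0 ≤ φ' u := by
      intro u hu
      have hf := fvec_lower Mt hbound hr0 hr1 (hyΔ p₀ hp₀ u hu) i
      have hfac : φ' u = Real.exp (2*u)
          * (fvec d Mt r (y p₀ u) i + 2 * y p₀ u i - r/(d:ℝ)) := by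
        rw [hφ'_def]
        field_simp
        ring
      rw [hfac]
      exact mul_nonneg (Real.exp_pos _).le (by linarith)
    have hφmono : MonotoneOn φ (Ici 0) := monoOn_Ici_of_deriv hφd hφ'nn
    have h1 : φ 0 ≤ φ s := hφmono (self_mem_Ici) hs0 hs0
    have h0val : φ 0 = p₀ i := by
      simp [hφ_def, hy0 p₀ hp₀]
    have hp₀nn : 0 ≤ p₀ i := hp₀.1 i
    have key : r/(2*(d:ℝ)) * (Real.exp (2*s) - 1) ≤ Real.exp (2*s) * y p₀ s i := by
      have := h1
      rw [h0val] at this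
      rw [hφ_def] at this
      simp only at this
      linarith
    have hs1 : (1:ℝ) ≤ s := hs
    have hE : (2:ℝ) ≤ Real.exp (2*s) := by
      have h3 : Real.exp 2 ≤ Real.exp (2*s) := Real.exp_le_exp.2 (by linarith)
      nlinarith [Real.add_one_le_exp (2:ℝ)]
    have h6 : c * Real.exp (2*s) ≤ r/(2*(d:ℝ)) * (Real.exp (2*s) - 1) := by
      have h7 : r/(2*(d:ℝ)) * (Real.exp (2*s) - 1) - c * Real.exp (2*s)
          = (r/(4*(d:ℝ))) * (Real.exp (2*s) - 2) := by
        rw [hc_def]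
        field_simp
        ring
      nlinarith [mul_nonneg (by positivity : (0:ℝ) ≤ r/(4*(d:ℝ)))
        (by linarith : (0:ℝ) ≤ Real.exp (2*s) - 2)]
    have hEpos := Real.exp_pos (2*s)
    nlinarith [key, h6, hEpos]
  have hzpos : ∀ s ∈ Ici (1:ℝ), ∀ i, 0 < y p₀ s i :=
    fun s hs i => lt_of_lt_of_le hc0 (hzc i s hs)
  have hmem : ∀ s ∈ Ici (1:ℝ), y p₀ s ∈ unitSimplex d :=
    fun s hs => hyΔ p₀ hp₀ s (Set.mem_Ici.2 (le_trans zero_le_one hs))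
  -- Step 2: the Lyapunov function and its decay
  set V : ℝ → ℝ := fun u => ∑ i, pr i * (Real.log (pr i) - Real.log (y p₀ u i)) with hV_def
  set S : ℝ → ℝ := fun u => ∑ i, pr i * (fvec d Mt r (y p₀ u) i / y p₀ u i) with hS_def
  have hVd : ∀ u ∈ Ici (1:ℝ), HasDerivWithinAt V (-(S u)) (Ici 1) u := by
    intro u hu
    have hu0 : u ∈ Ici (0:ℝ) := Set.mem_Ici.2 (le_trans zero_le_one hu)
    have hsub : Ici (1:ℝ) ⊆ Ici (0:ℝ) := Ici_subset_Ici.2 zero_le_one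
    have hterm : ∀ i : Fin d, HasDerivWithinAt
        (fun v => pr i * (Real.log (pr i) - Real.log (y p₀ v i)))
        (pr i * (0 - fvec d Mt r (y p₀ u) i / y p₀ u i)) (Ici 1) u := by
      intro i
      have hzi : HasDerivWithinAt (fun v => y p₀ v i) (fvec d Mt r (y p₀ u) i) (Ici 1) u :=
        (hasDerivWithinAt_pi.1 (hyD p₀ hp₀ u hu0) i).mono hsub
      have hne : y p₀ u i ≠ 0 := (hzpos u hu i).ne'
      exact ((hasDerivWithinAt_const u _ (Real.log (pr i))).sub (hzi.log hne)).const_mul (pr i)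
    have hs := HasDerivWithinAt.fun_sum (fun i (_ : i ∈ Finset.univ) => hterm i)
    have heq : -(S u) = ∑ i, pr i * (0 - fvec d Mt r (y p₀ u) i / y p₀ u i) := by
      rw [hS_def, ← Finset.sum_neg_distrib]
      exact Finset.sum_congr rfl fun i _ => by ring
    rw [hV_def, heq]
    exact hs
  have hαVS : ∀ u ∈ Ici (1:ℝ), α * V u ≤ S u := by
    intro u hu
    have hS1 : (r / (d:ℝ)) * ∑ i, (y p₀ u i - pr i) ^ 2 ≤ S u :=
      key_ineq Mt hskew hr0 hpr (hmem u hu) hprz (hzpos u hu) hprpos hd0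
    have hsum : ∑ i, y p₀ u i = ∑ i, pr i := by rw [(hmem u hu).2, hpr.2]
    have hV1 : V u ≤ (1/c) * ∑ i, (y p₀ u i - pr i) ^ 2 :=
      V_upper hc0 hsum hprpos (fun i => hzc i u hu)
    have hcalc : α * ((1/c) * ∑ i, (y p₀ u i - pr i) ^ 2)
        = (r / (d:ℝ)) * ∑ i, (y p₀ u i - pr i) ^ 2 := by
      rw [hα_def]
      field_simp
    calc α * V u ≤ α * ((1/c) * ∑ i, (y p₀ u i - pr i) ^ 2) :=
          mul_le_mul_of_nonneg_left hV1 hα0.le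
      _ = (r / (d:ℝ)) * ∑ i, (y p₀ u i - pr i) ^ 2 := hcalc
      _ ≤ S u := hS1
  set W : ℝ → ℝ := fun u => Real.exp (α*(u-1)) * V u with hW_def
  have hWanti : AntitoneOn W (Ici 1) := by
    apply antiOn_Ici_of_deriv
      (g' := fun u => Real.exp (α*(u-1)) * α * V u + Real.exp (α*(u-1)) * (-(S u)))
    · intro u hu
      have he : HasDerivAt (fun v : ℝ => Real.exp (α*(v-1))) (Real.exp (α*(u-1)) * α) u := by
        have h2 : HasDerivAt (fun v : ℝ => α*(v-1)) α u := by
          simpa using ((hasDerivAt_id u).sub_const 1).const_mul α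
        exact (Real.hasDerivAt_exp (α*(u-1))).comp u h2
      exact he.hasDerivWithinAt.mul (hVd u hu)
    · intro u hu
      have h8 : Real.exp (α*(u-1)) * α * V u + Real.exp (α*(u-1)) * (-(S u))
          = Real.exp (α*(u-1)) * (α * V u - S u) := by ring
      rw [h8]
      exact mul_nonpos_of_nonneg_of_nonpos (Real.exp_pos _).le (by linarith [hαVS u hu])
  -- V(1) is bounded by L
  have hV1L : V 1 ≤ L := by
    rw [hV_def]
    calc ∑ i, pr i * (Real.log (pr i) - Real.log (y p₀ 1 i))
        ≤ ∑ i, pr i * L := by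
          refine Finset.sum_le_sum fun i _ => ?_
          refine mul_le_mul_of_nonneg_left ?_ (hprpos i).le
          have hlpr : Real.log (pr i) ≤ 0 :=
            Real.log_nonpos (hprpos i).le (simplex_le_one hpr i)
          have hlz : Real.log c ≤ Real.log (y p₀ 1 i) :=
            Real.log_le_log hc0 (hzc i 1 self_mem_Ici)
          rw [hL_def]
          linarith
      _ = L := by rw [← Finset.sum_mul, hpr.2, one_mul]
  -- exponential decay of V
  have hVt : V t ≤ L * Real.exp (-(α*(t-1))) := by
    have h7 : W t ≤ W 1 := hWanti self_mem_Ici ht ht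
    have h7' : Real.exp (α*(t-1)) * V t ≤ Real.exp (α*((1:ℝ)-1)) * V 1 := h7
    have h7'' : Real.exp (α*((1:ℝ)-1)) * V 1 = V 1 := by norm_num
    have h9 : Real.exp (α*(t-1)) * V t ≤ L := by linarith [hV1L]
    have hEpos := Real.exp_pos (α*(t-1))
    have h10 : V t = (Real.exp (α*(t-1)) * V t) * Real.exp (-(α*(t-1))) := by
      rw [Real.exp_neg]
      field_simp
    rw [h10]
    exact mul_le_mul_of_nonneg_right h9 (Real.exp_pos _).le
  -- lower bound for V via Pinsker-type inequality
  have hpB : ∀ i, y p₀ t i ≤ B * pr i := by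
    intro i
    have h11 : (6:ℝ) ≤ B * pr i := by
      have h12 : B * (r/(2*(d:ℝ))) ≤ B * pr i :=
        mul_le_mul_of_nonneg_left (hprl i) hB0.le
      have h13 : B * (r/(2*(d:ℝ))) = 6 := by
        rw [hB_def]
        field_simp
        ring
      linarith
    linarith [simplex_le_one (hmem t ht) i]
  have hsumt : ∑ i, y p₀ t i = ∑ i, pr i := by rw [(hmem t ht).2, hpr.2]
  have hVlow : (1/(2*B)) * ∑ i, (y p₀ t i - pr i) ^ 2 ≤ V t :=
    V_lower hB6 hsumt hprpos (fun i => simplex_le_one hpr i) (hzpos t ht) hpB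
  have hQle : ∑ i, (y p₀ t i - pr i) ^ 2 ≤ 2*B*L*Real.exp (-(α*(t-1))) := by
    have h14 := hVlow.trans hVt
    have h15 : ∑ i, (y p₀ t i - pr i) ^ 2
        = (2*B) * ((1/(2*B)) * ∑ i, (y p₀ t i - pr i) ^ 2) := by
      field_simp
    rw [h15]
    calc (2*B) * ((1/(2*B)) * ∑ i, (y p₀ t i - pr i) ^ 2)
        ≤ (2*B) * (L * Real.exp (-(α*(t-1)))) :=
          mul_le_mul_of_nonneg_left h14 (by positivity)
      _ = 2*B*L*Real.exp (-(α*(t-1))) := by ring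
  -- from squared L2 to L1
  have hl1sq : (l1dist (y p₀ t) pr) ^ 2 ≤ (d:ℝ) * ∑ i, (y p₀ t i - pr i) ^ 2 := by
    unfold l1dist
    have h16 := sq_sum_le_card_mul_sum_sq (s := Finset.univ)
      (f := fun i => |y p₀ t i - pr i|)
    simpa [sq_abs, Finset.card_univ] using h16
  have hexpsq : (Real.exp (-(α/2)*(t-1))) ^ 2 = Real.exp (-(α*(t-1))) := by
    rw [sq, ← Real.exp_add]
    ring_nf
  have hRHSsq : (C * Real.exp (-(α/2)*(t-1))) ^ 2
      = (d:ℝ) * (2*B*L*Real.exp (-(α*(t-1)))) := by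
    rw [mul_pow, hC_def, Real.sq_sqrt (by positivity), hexpsq]
    ring
  have h17 : (l1dist (y p₀ t) pr) ^ 2 ≤ (C * Real.exp (-(α/2)*(t-1))) ^ 2 := by
    rw [hRHSsq]
    calc (l1dist (y p₀ t) pr) ^ 2 ≤ (d:ℝ) * ∑ i, (y p₀ t i - pr i) ^ 2 := hl1sq
      _ ≤ (d:ℝ) * (2*B*L*Real.exp (-(α*(t-1)))) :=
          mul_le_mul_of_nonneg_left hQle hd0.le
  have hl1nn : 0 ≤ l1dist (y p₀ t) pr := Finset.sum_nonneg fun i _ => abs_nonneg _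
  have hRnn : 0 ≤ C * Real.exp (-(α/2)*(t-1)) := by positivity
  calc l1dist (y p₀ t) pr = Real.sqrt ((l1dist (y p₀ t) pr) ^ 2) :=
        (Real.sqrt_sq hl1nn).symm
    _ ≤ Real.sqrt ((C * Real.exp (-(α/2)*(t-1))) ^ 2) := Real.sqrt_le_sqrt h17
    _ = C * Real.exp (-(α/2)*(t-1)) := Real.sqrt_sq hRnn

/-- For `r ∈ (0,1]`, the solutions `y^{(r)}(·,p₀)` of the replicator-mutation ODE converge
to the unique zero `p^{(r)}` of `f^{(r)}`, uniformly in the initial state `p₀ ∈ Δ`: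
`lim_{t→∞} sup{ |y^{(r)}(t,p₀) − p^{(r)}| : p₀ ∈ Δ } = 0`. -/
theorem stmt6 (d : ℕ) (hd : 1 ≤ d) (Mt : Matrix (Fin d) (Fin d) ℝ)
    (hskew : ∀ i j, Mt j i = - Mt i j) (hbound : ∀ i j, |Mt i j| ≤ 1)
    (r : ℝ) (hr0 : 0 < r) (hr1 : r ≤ 1)
    -- `pr` is the (unique) zero of `f^{(r)}` in the simplex
    (pr : Fin d → ℝ) (hpr : pr ∈ unitSimplex d) (hprz : fvec d Mt r pr = 0)
    (hpruniq : ∀ q ∈ unitSimplex d, fvec d Mt r q = 0 → q = pr)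
    -- `y p₀` is the solution of `y' = f^{(r)}(y)` with `y(0) = p₀`, for each `p₀ ∈ Δ`
    (y : (Fin d → ℝ) → ℝ → Fin d → ℝ)
    (hy0 : ∀ p₀ ∈ unitSimplex d, y p₀ 0 = p₀)
    (hyΔ : ∀ p₀ ∈ unitSimplex d, ∀ t ∈ Ici (0 : ℝ), y p₀ t ∈ unitSimplex d)
    (hyD : ∀ p₀ ∈ unitSimplex d, ∀ t ∈ Ici (0 : ℝ),
      HasDerivWithinAt (y p₀) (fvec d Mt r (y p₀ t)) (Ici 0) t) :
    Tendsto (fun t : ℝ => ⨆ p₀ ∈ unitSimplex d, l1dist (y p₀ t) pr) atTop (nhds 0) := by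

  have hd1 : (1:ℝ) ≤ (d:ℝ) := by exact_mod_cast hd
  have hd0 : (0:ℝ) < (d:ℝ) := by linarith
  have h4d : (0:ℝ) < 4*(d:ℝ) := by linarith
  obtain ⟨C, α, hC0, hα0, master⟩ :
      ∃ C α : ℝ, 0 ≤ C ∧ 0 < α ∧ ∀ t ∈ Ici (1:ℝ), ∀ p₀ ∈ unitSimplex d,
        l1dist (y p₀ t) pr ≤ C * Real.exp (-(α/2) * (t-1)) :=
    ⟨_, _, Real.sqrt_nonneg _, div_pos (mul_pos hr0 (div_pos hr0 h4d)) hd0,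
      master_bound d hd Mt hskew hbound r hr0 hr1 pr hpr hprz y hy0 hyΔ hyD⟩

  -- conclude via squeeze
  have hsupnn : ∀ t : ℝ, 0 ≤ ⨆ p₀ ∈ unitSimplex d, l1dist (y p₀ t) pr := fun t =>
    Real.iSup_nonneg fun p₀ =>
      Real.iSup_nonneg fun _ => Finset.sum_nonneg fun i _ => abs_nonneg _
  have hsuple : ∀ t ∈ Ici (1:ℝ),
      (⨆ p₀ ∈ unitSimplex d, l1dist (y p₀ t) pr) ≤ C * Real.exp (-(α/2)*(t-1)) := by
    intro t ht
    have hrn : 0 ≤ C * Real.exp (-(α/2)*(t-1)) := by positivity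
    exact Real.iSup_le (fun p₀ => Real.iSup_le (fun hp₀ => master t ht p₀ hp₀) hrn) hrn
  have hlim : Tendsto (fun t : ℝ => C * Real.exp (-(α/2)*(t-1))) atTop (nhds 0) := by
    rw [show (0:ℝ) = C * 0 by ring]
    apply Tendsto.const_mul
    apply Real.tendsto_exp_atBot.comp
    have h1 : Tendsto (fun t : ℝ => (α/2)*(t-1)) atTop atTop :=
      (tendsto_atTop_add_const_right atTop (-1:ℝ) tendsto_id).const_mul_atTop (half_pos hα0)
    have h2 : Tendsto (fun t : ℝ => -((α/2)*(t-1))) atTop atBot :=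
      tendsto_neg_atTop_atBot.comp h1
    exact h2.congr fun t => by ring
  apply tendsto_of_tendsto_of_tendsto_of_le_of_le' tendsto_const_nhds hlim
  · exact Eventually.of_forall hsupnn
  · exact (eventually_ge_atTop 1).mono hsuple
end
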